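/- Every facet of Simion's type B associahedron Γ_n^B contains exactly one diameter, i.e., exactly one B-diagonal of the form {i, ī} joining antipodal points of the (2n+2)-gon. -/
import Mathlib


/-- `x` lies strictly inside the clockwise arc from `a` to `b` on the
`(2n+2)`-gon with vertices `ZMod (2n+2)`. -/
def StrictlyBetween (n : ℕ) (a x b : ZMod (2 * n + 2)) : Prop :=
  0 < (x - a).val ∧ (x - a).val < (b - a).val

/-- Two chords of the `(2n+2)`-gon cross (intersect in the interior of the
polygon): there are labelings `p = {a,b}`, `q = {c,d}` with `c` strictly inside the
arc from `a` to `b` and `d` strictly inside the arc from `b` to `a`. -/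
def ChordsCross (n : ℕ) (p q : Sym2 (ZMod (2 * n + 2))) : Prop :=
  ∃ a b c d : ZMod (2 * n + 2), p = s(a, b) ∧ q = s(c, d) ∧
    StrictlyBetween n a c b ∧ StrictlyBetween n b d a

/-- The antipodal map on chords of the `(2n+2)`-gon. -/
def antipodalChord (n : ℕ) (p : Sym2 (ZMod (2 * n + 2))) : Sym2 (ZMod (2 * n + 2)) :=
  Sym2.map (fun x => x + (n + 1 : ℕ)) p

/-- `p` is a diagonal of the `(2n+2)`-gon: a chord whose endpoints are distinct and
nonadjacent. -/
def IsPolygonDiagonal (n : ℕ) (p : Sym2 (ZMod (2 * n + 2))) : Prop :=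
  ∃ a b : ZMod (2 * n + 2), p = s(a, b) ∧ 2 ≤ (b - a).val ∧ 2 ≤ (a - b).val

/-- A face of Simion's type `B` associahedron `Γ_n^B`, viewed as the collection of
all diagonals occurring in a set of pairwise noncrossing `B`-diagonals: a set of
diagonals of the `(2n+2)`-gon that is closed under the antipodal map and pairwise
noncrossing. -/
def IsSimionFace (n : ℕ) (S : Finset (Sym2 (ZMod (2 * n + 2)))) : Prop :=
  (∀ p ∈ S, IsPolygonDiagonal n p ∧ antipodalChord n p ∈ S) ∧
    (∀ p ∈ S, ∀ q ∈ S, p ≠ q → ¬ ChordsCross n p q)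


section Aux
variable {n : ℕ}

instance : NeZero (2*n+2) := ⟨by omega⟩

private lemma vlt (x : ZMod (2*n+2)) : x.val < 2*n+2 := ZMod.val_lt x

private lemma cvi (x : ZMod (2*n+2)) : ((x.val : ℕ) : ZMod (2*n+2)) = x :=
  ZMod.natCast_rightInverse x

private lemma vinj {x y : ZMod (2*n+2)} (h : x.val = y.val) : x = y := by
  rw [← cvi x, ← cvi y, h]

private lemma vsub (x y : ZMod (2*n+2)) :
    (x - y).val = if y.val ≤ x.val then x.val - y.val else x.val + (2*n+2) - y.val := by
  have hx := vlt x; have hy := vlt y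
  split_ifs with h
  · have e : x - y = ((x.val - y.val : ℕ) : ZMod (2*n+2)) := by
      rw [Nat.cast_sub h, cvi, cvi]
    rw [e, ZMod.val_cast_of_lt (by omega)]
  · have e : x - y = ((x.val + (2*n+2) - y.val : ℕ) : ZMod (2*n+2)) := by
      rw [Nat.cast_sub (by omega : y.val ≤ x.val + (2*n+2))]
      push_cast [cvi]
      have h2 : ((2*n+2 : ℕ) : ZMod (2*n+2)) = 0 := ZMod.natCast_self _
      push_cast at h2
      rw [show (2*(n:ZMod (2*n+2))+2) = 0 from h2]
      ring
    rw [e, ZMod.val_cast_of_lt (by omega)]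

private lemma vadd (x y : ZMod (2*n+2)) :
    (x + y).val = if x.val + y.val < 2*n+2 then x.val + y.val else x.val + y.val - (2*n+2) := by
  have hx := vlt x; have hy := vlt y
  rw [ZMod.val_add]
  split_ifs with h
  · exact Nat.mod_eq_of_lt h
  · rw [Nat.mod_eq_sub_mod (by omega), Nat.mod_eq_of_lt (by omega)]

private lemma vc : ((n+1 : ℕ) : ZMod (2*n+2)).val = n+1 :=
  ZMod.val_cast_of_lt (by omega)

private lemma ccancel : ((n+1 : ℕ) : ZMod (2*n+2)) + ((n+1 : ℕ) : ZMod (2*n+2)) = 0 := by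
  have h : (((n+1) + (n+1) : ℕ) : ZMod (2*n+2)) = 0 := by
    rw [show (n+1) + (n+1) = 2*n+2 from by ring, ZMod.natCast_self]
  push_cast at h
  exact_mod_cast h

private lemma crossSymm {p q : Sym2 (ZMod (2*n+2))} (h : ChordsCross n p q) :
    ChordsCross n q p := by
  obtain ⟨a, b, c, d, hp, hq, ⟨h1, h2⟩, ⟨h3, h4⟩⟩ := h
  refine ⟨c, d, b, a, hq, hp.trans Sym2.eq_swap, ?_, ?_⟩ <;>
    constructor <;>
    · simp only [vsub] at h1 h2 h3 h4 ⊢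
      have := vlt a; have := vlt b; have := vlt c; have := vlt d
      split_ifs at * <;> omega

private lemma fixed_diam {p : Sym2 (ZMod (2*n+2))} (h : antipodalChord n p = p) :
    ∃ x : ZMod (2*n+2), p = s(x, x + ((n+1 : ℕ) : ZMod (2*n+2))) := by
  induction p using Sym2.ind with
  | _ x y =>
    rw [antipodalChord, Sym2.map_pair_eq, Sym2.eq_iff] at h
    rcases h with ⟨h1, _⟩ | ⟨h1, _⟩
    · exfalso
      have hc0 : ((n+1 : ℕ) : ZMod (2*n+2)) = 0 := by
        have := add_eq_left.mp h1
        exact this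
      have := vc (n := n)
      rw [hc0, ZMod.val_zero] at this
      omega
    · exact ⟨x, by rw [← h1]⟩

private lemma diams_cross {x z : ZMod (2*n+2)} (h1 : z ≠ x)
    (h2 : z ≠ x + ((n+1 : ℕ) : ZMod (2*n+2))) :
    ChordsCross n s(x, x + ((n+1 : ℕ) : ZMod (2*n+2)))
      s(z, z + ((n+1 : ℕ) : ZMod (2*n+2))) := by
  have hv1 : z.val ≠ x.val := fun h => h1 (vinj h)
  have hv2 : z.val ≠ (x + ((n+1 : ℕ) : ZMod (2*n+2))).val := fun h => h2 (vinj h)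
  have hx := vlt x; have hz := vlt z
  rw [vadd, vc] at hv2
  by_cases hcase : (z - x).val < n+1
  · refine ⟨x, x + _, z, z + _, rfl, rfl, ?_, ?_⟩ <;> constructor <;>
    · simp only [StrictlyBetween, vsub, vadd, vc] at hcase ⊢
      split_ifs at * <;> omega
  · refine ⟨x, x + _, z + _, z, rfl, Sym2.eq_swap, ?_, ?_⟩ <;> constructor <;>
    · simp only [StrictlyBetween, vsub, vadd, vc] at hcase ⊢
      split_ifs at * <;> omega

end Aux

private def slen (n : ℕ) : Sym2 (ZMod (2*n+2)) → ℕ :=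
  Sym2.lift ⟨fun a b => min (b-a).val (a-b).val, fun a b => by simp only []; rw [min_comm]⟩

private lemma slen_mk (a b : ZMod (2*n+2)) :
    slen n s(a,b) = min (b-a).val (a-b).val := rfl

set_option maxHeartbeats 2000000 in
theorem simion_facet_has_unique_diameter (n : ℕ) (hn : 1 ≤ n)
    (S : Finset (Sym2 (ZMod (2 * n + 2)))) (hface : IsSimionFace n S)
    (hmax : ∀ T : Finset (Sym2 (ZMod (2 * n + 2))), IsSimionFace n T → S ⊆ T → S = T) :
    ∃! p, p ∈ S ∧ antipodalChord n p = p := by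
  have hC : ((n+1 : ℕ) : ZMod (2*n+2)).val = n+1 := vc
  have hCC : ((n+1 : ℕ) : ZMod (2*n+2)) + ((n+1 : ℕ) : ZMod (2*n+2)) = 0 := ccancel
  set c : ZMod (2*n+2) := ((n+1 : ℕ) : ZMod (2*n+2)) with hc
  have hfixd : ∀ x : ZMod (2*n+2), antipodalChord n s(x, x + c) = s(x, x + c) := by
    intro x
    rw [antipodalChord, Sym2.map_pair_eq, ← hc,
      show x + c + c = x from by rw [add_assoc, hCC, add_zero]]
    exact Sym2.eq_swap
  have hex : ∃ p ∈ S, antipodalChord n p = p := by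
    by_contra hno
    push_neg at hno
    obtain ⟨b0, hb0⟩ : ∃ b0 : ZMod (2*n+2), ∀ q ∈ S, ¬ ChordsCross n s(b0, b0+c) q := by
      rcases S.eq_empty_or_nonempty with hS | hS
      · exact ⟨0, by simp [hS]⟩
      obtain ⟨p, hpS, hpmax⟩ := Finset.exists_max_image S (slen n) hS
      obtain ⟨a, b, hpab, ha2, hb2, hle⟩ :
          ∃ a b, p = s(a,b) ∧ 2 ≤ (b-a).val ∧ 2 ≤ (a-b).val ∧ (b-a).val ≤ (a-b).val := by
        obtain ⟨a, b, hpab, ha2, hb2⟩ := (hface.1 p hpS).1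
        rcases le_total (b-a).val (a-b).val with h | h
        · exact ⟨a, b, hpab, ha2, hb2, h⟩
        · exact ⟨b, a, hpab.trans Sym2.eq_swap, hb2, ha2, h⟩
      have hsum : (b-a).val + (a-b).val = 2*n+2 := by
        have := vlt a; have := vlt b
        rw [vsub, vsub] at *
        split_ifs at * <;> omega
      have hslenp : slen n p = (b-a).val := by
        rw [hpab, slen_mk]; exact min_eq_left hle
      have hln : (b-a).val ≤ n := by
        by_contra hh
        have h1 : (b-a).val = n+1 := by omega
        have : b - a = c := vinj (by rw [h1, hC])
        have hba : b = a + c := by rw [← this]; ring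
        exact hno p hpS (by rw [hpab, hba]; exact hfixd a)
      refine ⟨b, fun q hq hcr => ?_⟩
      -- endpoints of q are separated by the diameter s(b, b+c)
      obtain ⟨u, v, huv, h1, h2, h3, h4⟩ :
          ∃ u v, q = s(u,v) ∧ 0 < (u-b).val ∧ (u-b).val < n+1 ∧
            n+2 ≤ (v-b).val ∧ (v-b).val ≤ 2*n+1 := by
        obtain ⟨x, y, c', d', hdxy, hqcd, ⟨k1, k2⟩, ⟨k3, k4⟩⟩ := hcr
        have hb := vlt b; have hcv := vlt c; have hx := vlt x; have hy := vlt y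
        have hc' := vlt c'; have hd' := vlt d'
        rcases Sym2.eq_iff.mp hdxy with ⟨hxb, hyb⟩ | ⟨hxb, hyb⟩
        · refine ⟨c', d', hqcd, ?_, ?_, ?_, ?_⟩ <;>
          · subst hxb; subst hyb
            simp only [vsub, vadd, hC] at k1 k2 k3 k4 ⊢
            split_ifs at * <;> omega
        · refine ⟨d', c', hqcd.trans Sym2.eq_swap, ?_, ?_, ?_, ?_⟩ <;>
          · subst hxb; subst hyb
            simp only [vsub, vadd, hC] at k1 k2 k3 k4 ⊢
            split_ifs at * <;> omega
      have hmq : min (v-u).val (u-v).val ≤ (b-a).val := by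
        have := hpmax q hq
        rw [hslenp] at this
        rw [huv, slen_mk] at this
        exact this
      have hb := vlt b; have hu := vlt u; have hv := vlt v
      -- find q0 = s(u0, v0) in S with b strictly inside the arc (u0, v0)
      obtain ⟨q0, u0, v0, hq0S, hq0, hm, ht1, ht2⟩ :
          ∃ q0 u0 v0, q0 ∈ S ∧ q0 = s(u0, v0) ∧ (v0-u0).val ≤ (b-a).val ∧
            0 < (b-u0).val ∧ (b-u0).val < (v0-u0).val := by
        rcases le_total (v-u).val (u-v).val with hmc | hmc
        · -- short arc is u → v ; it contains b+c strictly
          refine ⟨antipodalChord n q, u + c, v + c, (hface.1 q hq).2, ?_, ?_, ?_, ?_⟩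
          · rw [huv, antipodalChord, Sym2.map_pair_eq, ← hc]
          · rw [show v + c - (u + c) = v - u from by ring]; omega
          all_goals
            simp only [show b - (u + c) = (b + c) - u - (c + c) from by ring, hCC, sub_zero,
              show v + c - (u + c) = v - u from by ring]
            simp only [vsub, vadd, hC] at h1 h2 h3 h4 hmc ⊢
            split_ifs at * <;> omega
        · -- short arc is v → u ; it contains b strictly
          refine ⟨q, v, u, hq, huv.trans Sym2.eq_swap, by omega, ?_, ?_⟩ <;>
          · simp only [vsub, vadd, hC] at h1 h2 h3 h4 hmc ⊢
            split_ifs at * <;> omega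
      -- now p and q0 cross
      have hne : p ≠ q0 := by
        intro he
        rw [hpab, hq0] at he
        rcases Sym2.eq_iff.mp he with ⟨_, hbv⟩ | ⟨_, hbu⟩
        · rw [hbv] at ht2
          exact lt_irrefl _ ht2
        · rw [hbu, sub_self, ZMod.val_zero] at ht1
          exact lt_irrefl _ ht1
      refine hface.2 p hpS q0 hq0S hne ⟨a, b, u0, v0, hpab, hq0, ?_, ?_⟩ <;> constructor <;>
      · have hA := vlt a; have hB := vlt b; have hU := vlt u0; have hV := vlt v0
        simp only [show u0 - a = (b - a) - (b - u0) from by ring,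
          show v0 - b = (v0 - u0) - (b - u0) from by ring]
        simp only [vsub] at ht1 ht2 hm ha2 hb2 hln ⊢
        split_ifs at * <;> omega
    set d := s(b0, b0 + c) with hd
    have hdS : d ∉ S := fun h => hno d h (hfixd b0)
    have hface' : IsSimionFace n (insert d S) := by
      constructor
      · intro p hp
        rcases Finset.mem_insert.mp hp with rfl | hp
        · refine ⟨⟨b0, b0 + c, rfl, ?_, ?_⟩, ?_⟩
          · rw [show b0 + c - b0 = c from by ring, hC]; omega
          · rw [show b0 - (b0 + c) = c - (c + c) from by ring, hCC, sub_zero, hC]; omega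
          · rw [hfixd b0]; exact Finset.mem_insert_self _ _
        · obtain ⟨hh1, hh2⟩ := hface.1 p hp
          exact ⟨hh1, Finset.mem_insert_of_mem hh2⟩
      · intro p hp q hq hne
        rcases Finset.mem_insert.mp hp with rfl | hp <;>
          rcases Finset.mem_insert.mp hq with rfl | hq
        · exact absurd rfl hne
        · exact hb0 q hq
        · exact fun hcr => hb0 p hp (crossSymm hcr)
        · exact hface.2 p hp q hq hne
    have heq := hmax (insert d S) hface' (Finset.subset_insert _ _)
    exact hdS (heq ▸ Finset.mem_insert_self d S)
  obtain ⟨p, hp, hfix⟩ := hex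
  refine ⟨p, ⟨hp, hfix⟩, ?_⟩
  rintro q ⟨hq, hqfix⟩
  by_contra hne
  obtain ⟨x, hx⟩ := fixed_diam hfix
  obtain ⟨z, hz⟩ := fixed_diam hqfix
  rw [← hc] at hx hz
  have hzx : z ≠ x := by
    rintro rfl; exact hne (by rw [hz, hx])
  have hzx2 : z ≠ x + c := by
    rintro rfl
    refine hne ?_
    rw [hz, hx, show x + c + c = x from by rw [add_assoc, hCC, add_zero]]
    exact Sym2.eq_swap
  have hcr : ChordsCross n p q := by
    rw [hx, hz, hc]
    exact diams_cross hzx hzx2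
  exact hface.2 p hp q hq (fun h => hne h.symm) hcr
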